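/- Consider the stochastic iterate θ_{k+1} = θ_k − β·v_k in ℝ^d, where E[v_k | θ_k] = μ_h·∇F(θ_k) and E[‖v_k‖² | θ_k] = μ_h²‖∇F(θ_k)‖² + σ̃_k with σ̃_k ≥ 0, and F is μ-strongly convex with L-Lipschitz gradient and minimizer θ*. If 0 < β ≤ 2/(μ_h(μ+L)), then E[‖θ_{k+1} − θ*‖²] ≤ (1 − 2βμ_h μL/(μ+L))·E[‖θ_k − θ*‖²] + β²·E[σ̃_k]. -/

import Mathlib

open MeasureTheory ProbabilityTheory
open scoped RealInnerProductSpace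

section Aux

variable {E : Type*} [NormedAddCommGroup E] [InnerProductSpace ℝ E] [CompleteSpace E]

private lemma stmt11_line_hasDerivAt {F : E → ℝ} {F' : E → E}
    (hF : ∀ x, HasGradientAt F (F' x) x) (x e : E) (t : ℝ) :
    HasDerivAt (fun s : ℝ => F (x + s • e)) ⟪F' (x + t • e), e⟫ t := by
  have hc : HasDerivAt (fun s : ℝ => x + s • e) e t := by
    simpa using ((hasDerivAt_id t).smul_const e).const_add x
  have hf := (hasGradientAt_iff_hasFDerivAt.mp (hF (x + t • e))).comp_hasDerivAt t hc
  simp [InnerProductSpace.toDual_apply_apply] at hf; exact hf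

private lemma stmt11_descent {F : E → ℝ} {F' : E → E} {L : ℝ}
    (hF : ∀ x, HasGradientAt F (F' x) x)
    (hlip : ∀ x y, ‖F' x - F' y‖ ≤ L * ‖x - y‖) (x y : E) :
    F y ≤ F x + ⟪F' x, y - x⟫ + L / 2 * ‖y - x‖ ^ 2 := by
  set e := y - x with he
  set h : ℝ → ℝ := fun t => F (x + t • e) - t * ⟪F' x, e⟫ - L * t ^ 2 / 2 * ‖e‖ ^ 2 with hh
  have hder : ∀ t : ℝ, HasDerivAt h (⟪F' (x + t • e), e⟫ - ⟪F' x, e⟫ - L * t * ‖e‖ ^ 2) t := by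
    intro t
    have h1 := stmt11_line_hasDerivAt hF x e t
    have h2 : HasDerivAt (fun t : ℝ => t * ⟪F' x, e⟫) ⟪F' x, e⟫ t := by
      simpa using (hasDerivAt_id t).mul_const ⟪F' x, e⟫
    have h3 : HasDerivAt (fun t : ℝ => L * t ^ 2 / 2 * ‖e‖ ^ 2) (L * t * ‖e‖ ^ 2) t := by
      have h4 : HasDerivAt (fun t : ℝ => t ^ 2) (2 * t) t := by
        simpa using hasDerivAt_pow 2 t
      have := ((h4.const_mul L).div_const 2).mul_const (‖e‖ ^ 2)
      exact this.congr_deriv (by ring)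
    exact (h1.sub h2).sub h3
  have hanti : AntitoneOn h (Set.Icc 0 1) := by
    apply antitoneOn_of_deriv_nonpos (convex_Icc 0 1)
    · exact fun t _ => ((hder t).continuousAt).continuousWithinAt
    · exact fun t _ => ((hder t).differentiableAt).differentiableWithinAt
    · intro t ht
      rw [interior_Icc] at ht
      rw [(hder t).deriv]
      have hbd : ⟪F' (x + t • e) - F' x, e⟫ ≤ L * t * ‖e‖ ^ 2 := by
        calc ⟪F' (x + t • e) - F' x, e⟫ ≤ ‖F' (x + t • e) - F' x‖ * ‖e‖ :=
              real_inner_le_norm _ _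
          _ ≤ (L * ‖(x + t • e) - x‖) * ‖e‖ :=
              mul_le_mul_of_nonneg_right (hlip (x + t • e) x) (norm_nonneg _)
          _ = L * t * ‖e‖ ^ 2 := by
              have hs : ‖(x + t • e) - x‖ = t * ‖e‖ := by
                simp [norm_smul, abs_of_nonneg ht.1.le]
              rw [hs]; ring
      rw [inner_sub_left] at hbd
      linarith
  have h10 : h 1 ≤ h 0 := hanti (by norm_num) (by norm_num) (by norm_num)
  have hx1 : x + (1 : ℝ) • e = y := by simp [he]
  simp only [hh, hx1, one_mul, one_pow, zero_smul, add_zero, zero_mul, mul_zero,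
    zero_pow, sub_zero, zero_div] at h10
  nlinarith [h10]

private lemma stmt11_strong_lower {F : E → ℝ} {F' : E → E} {μ : ℝ}
    (hF : ∀ x, HasGradientAt F (F' x) x)
    (hstrong : ∀ x y, ⟪F' x - F' y, x - y⟫ ≥ μ * ‖x - y‖ ^ 2) (x y : E) :
    F x + ⟪F' x, y - x⟫ + μ / 2 * ‖y - x‖ ^ 2 ≤ F y := by
  set e := y - x with he
  set h : ℝ → ℝ := fun t => F (x + t • e) - t * ⟪F' x, e⟫ - μ * t ^ 2 / 2 * ‖e‖ ^ 2 with hh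
  have hder : ∀ t : ℝ, HasDerivAt h (⟪F' (x + t • e), e⟫ - ⟪F' x, e⟫ - μ * t * ‖e‖ ^ 2) t := by
    intro t
    have h1 := stmt11_line_hasDerivAt hF x e t
    have h2 : HasDerivAt (fun t : ℝ => t * ⟪F' x, e⟫) ⟪F' x, e⟫ t := by
      simpa using (hasDerivAt_id t).mul_const ⟪F' x, e⟫
    have h3 : HasDerivAt (fun t : ℝ => μ * t ^ 2 / 2 * ‖e‖ ^ 2) (μ * t * ‖e‖ ^ 2) t := by
      have h4 : HasDerivAt (fun t : ℝ => t ^ 2) (2 * t) t := by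
        simpa using hasDerivAt_pow 2 t
      have := ((h4.const_mul μ).div_const 2).mul_const (‖e‖ ^ 2)
      exact this.congr_deriv (by ring)
    exact (h1.sub h2).sub h3
  have hmono : MonotoneOn h (Set.Icc 0 1) := by
    apply monotoneOn_of_deriv_nonneg (convex_Icc 0 1)
    · exact fun t _ => ((hder t).continuousAt).continuousWithinAt
    · exact fun t _ => ((hder t).differentiableAt).differentiableWithinAt
    · intro t ht
      rw [interior_Icc] at ht
      rw [(hder t).deriv]
      have hst := hstrong (x + t • e) x
      have hsim : (x + t • e) - x = t • e := by abel
      rw [hsim, real_inner_smul_right, norm_smul, Real.norm_eq_abs] at hst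
      have ht0 : 0 < t := ht.1
      have hge : ⟪F' (x + t • e) - F' x, e⟫ ≥ μ * t * ‖e‖ ^ 2 := by
        rw [abs_of_pos ht0] at hst
        nlinarith [hst]
      rw [inner_sub_left] at hge
      linarith
  have h10 : h 0 ≤ h 1 := hmono (by norm_num) (by norm_num) (by norm_num)
  have hx1 : x + (1 : ℝ) • e = y := by simp [he]
  simp only [hh, hx1, one_mul, one_pow, zero_smul, add_zero, zero_mul, mul_zero,
    zero_pow, sub_zero, zero_div] at h10
  nlinarith [h10]

private lemma stmt11_cocoercive {φ : E → ℝ} {G : E → E} {M : ℝ} (hM : 0 < M)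
    (c1 : ∀ a b : E, φ a + ⟪G a, b - a⟫ ≤ φ b)
    (c2 : ∀ a b : E, φ b ≤ φ a + ⟪G a, b - a⟫ + M / 2 * ‖b - a‖ ^ 2) (x y : E) :
    (1 / M) * ‖G x - G y‖ ^ 2 ≤ ⟪G x - G y, x - y⟫ := by
  have star : ∀ a b : E, φ b - φ a + ⟪G b, a - b⟫ + 1 / (2 * M) * ‖G a - G b‖ ^ 2 ≤ 0 := by
    intro a b
    set g := G a - G b with hg
    set z := a - (1 / M) • g with hz
    have hza : z - a = -((1 / M) • g) := by simp [hz]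
    have e1 := c1 b z
    have e2 := c2 a z
    have h1 : ⟪G a, z - a⟫ = -(1 / M) * ⟪G a, g⟫ := by
      rw [hza, inner_neg_right, real_inner_smul_right]; ring
    have h2 : ‖z - a‖ ^ 2 = (1 / M) ^ 2 * ‖g‖ ^ 2 := by
      rw [hza, norm_neg, norm_smul, Real.norm_eq_abs, abs_of_pos (by positivity : (0:ℝ) < 1/M)]
      ring
    have h3 : ⟪G b, z - b⟫ = ⟪G b, a - b⟫ - 1 / M * ⟪G b, g⟫ := by
      have hzb : z - b = (a - b) + -((1/M) • g) := by rw [← hza]; abel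
      rw [hzb, inner_add_right, inner_neg_right, real_inner_smul_right]; ring
    have h4 : ⟪G a, g⟫ - ⟪G b, g⟫ = ‖g‖ ^ 2 := by
      rw [← inner_sub_left, ← hg, real_inner_self_eq_norm_sq]
    rw [h3] at e1
    rw [h1, h2] at e2
    have expand : M / 2 * ((1 / M) ^ 2 * ‖g‖ ^ 2) = 1 / (2 * M) * ‖g‖ ^ 2 := by
      field_simp
    rw [expand] at e2
    have h5 : 1 / M * ⟪G a, g⟫ - 1 / M * ⟪G b, g⟫ = 1 / M * ‖g‖ ^ 2 := by
      rw [← mul_sub, h4]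
    have hq : 1 / M * ‖g‖ ^ 2 = 2 * (1 / (2 * M) * ‖g‖ ^ 2) := by
      field_simp
    linarith [e1, e2, h5, hq]
  have s1 := star x y
  have s2 := star y x
  have hgsym : ‖G y - G x‖ = ‖G x - G y‖ := norm_sub_rev _ _
  rw [hgsym] at s2
  have key1 : ⟪G y, x - y⟫ + ⟪G x, y - x⟫ = -⟪G x - G y, x - y⟫ := by
    rw [inner_sub_left, show y - x = -(x - y) from by abel, inner_neg_right]; ring
  have hq : 2 * (1 / (2 * M) * ‖G x - G y‖ ^ 2) = 1 / M * ‖G x - G y‖ ^ 2 := by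
    field_simp
  linarith [s1, s2, key1, hq]

private lemma stmt11_key {F : E → ℝ} {F' : E → E} {μ L : ℝ} (hμ : 0 < μ) (hL : 0 < L)
    (hF : ∀ x, HasGradientAt F (F' x) x)
    (hstrong : ∀ x y, ⟪F' x - F' y, x - y⟫ ≥ μ * ‖x - y‖ ^ 2)
    (hlip : ∀ x y, ‖F' x - F' y‖ ≤ L * ‖x - y‖) (x y : E) :
    (μ + L) * ⟪F' x - F' y, x - y⟫ ≥ μ * L * ‖x - y‖ ^ 2 + ‖F' x - F' y‖ ^ 2 := by
  rcases le_or_gt ‖F' x - F' y‖ (μ * ‖x - y‖) with hcase | hcase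
  · have h1 := hstrong x y
    have h2 : ‖F' x - F' y‖ ^ 2 ≤ μ ^ 2 * ‖x - y‖ ^ 2 := by
      nlinarith [norm_nonneg (F' x - F' y), norm_nonneg (x - y)]
    nlinarith [norm_nonneg (x - y)]
  · have hML : μ < L := by
      rcases eq_or_ne ‖x - y‖ 0 with h0 | h0
      · exfalso
        have hl := hlip x y
        rw [h0, mul_zero] at hl hcase
        have h00 : ‖F' x - F' y‖ = 0 := le_antisymm hl (norm_nonneg _)
        rw [h00] at hcase; exact lt_irrefl 0 hcase
      · have hpos : 0 < ‖x - y‖ := lt_of_le_of_ne (norm_nonneg _) (Ne.symm h0)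
        have := lt_of_lt_of_le hcase (hlip x y)
        exact lt_of_mul_lt_mul_right this hpos.le
    have hM0 : (0:ℝ) < L - μ := by linarith
    have c1 : ∀ a b : E, (fun t => F t - μ / 2 * ‖t‖ ^ 2) a
        + ⟪(fun t => F' t - μ • t) a, b - a⟫ ≤ (fun t => F t - μ / 2 * ‖t‖ ^ 2) b := by
      intro a b
      simp only
      have h1 := stmt11_strong_lower hF hstrong a b
      have hnorm : ‖b‖ ^ 2 = ‖a‖ ^ 2 + 2 * ⟪a, b - a⟫ + ‖b - a‖ ^ 2 := by
        simpa using norm_add_sq_real a (b - a)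
      have hin : ⟪F' a - μ • a, b - a⟫ = ⟪F' a, b - a⟫ - μ * ⟪a, b - a⟫ := by
        rw [inner_sub_left, real_inner_smul_left]
      rw [hin]
      nlinarith [h1]
    have c2 : ∀ a b : E, (fun t => F t - μ / 2 * ‖t‖ ^ 2) b
        ≤ (fun t => F t - μ / 2 * ‖t‖ ^ 2) a + ⟪(fun t => F' t - μ • t) a, b - a⟫
          + (L - μ) / 2 * ‖b - a‖ ^ 2 := by
      intro a b
      simp only
      have h1 := stmt11_descent hF hlip a b
      have hnorm : ‖b‖ ^ 2 = ‖a‖ ^ 2 + 2 * ⟪a, b - a⟫ + ‖b - a‖ ^ 2 := by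
        simpa using norm_add_sq_real a (b - a)
      have hin : ⟪F' a - μ • a, b - a⟫ = ⟪F' a, b - a⟫ - μ * ⟪a, b - a⟫ := by
        rw [inner_sub_left, real_inner_smul_left]
      rw [hin]
      nlinarith [h1]
    have hco := stmt11_cocoercive hM0 c1 c2 x y
    have hGexp : (F' x - μ • x) - (F' y - μ • y) = (F' x - F' y) - μ • (x - y) := by
      rw [smul_sub]; abel
    rw [hGexp] at hco
    have hGn : ‖(F' x - F' y) - μ • (x - y)‖ ^ 2
        = ‖F' x - F' y‖ ^ 2 - 2 * μ * ⟪F' x - F' y, x - y⟫ + μ ^ 2 * ‖x - y‖ ^ 2 := by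
      rw [norm_sub_sq_real, real_inner_smul_right, norm_smul, Real.norm_eq_abs, abs_of_pos hμ]
      ring
    have hGi : ⟪(F' x - F' y) - μ • (x - y), x - y⟫
        = ⟪F' x - F' y, x - y⟫ - μ * ‖x - y‖ ^ 2 := by
      rw [inner_sub_left, real_inner_smul_left, real_inner_self_eq_norm_sq]
    rw [hGn, hGi] at hco
    have hfin := mul_le_mul_of_nonneg_left hco hM0.le
    rw [show (L - μ) * ((1 / (L - μ)) * (‖F' x - F' y‖ ^ 2 - 2 * μ * ⟪F' x - F' y, x - y⟫
        + μ ^ 2 * ‖x - y‖ ^ 2)) = ‖F' x - F' y‖ ^ 2 - 2 * μ * ⟪F' x - F' y, x - y⟫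
        + μ ^ 2 * ‖x - y‖ ^ 2 from by field_simp] at hfin
    nlinarith [hfin]

private lemma stmt11_condexp_clm {Ω : Type*} {m m0 : MeasurableSpace Ω} {μ : Measure Ω}
    [IsFiniteMeasure μ] (hm : m ≤ m0) {E G : Type*}
    [NormedAddCommGroup E] [NormedSpace ℝ E] [CompleteSpace E]
    [NormedAddCommGroup G] [NormedSpace ℝ G] [CompleteSpace G]
    (T : E →L[ℝ] G) {f : Ω → E} (hf : Integrable f μ) :
    (μ[fun ω => T (f ω)|m]) =ᵐ[μ] fun ω => T ((μ[f|m]) ω) := by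
  refine (ae_eq_condExp_of_forall_setIntegral_eq hm (T.integrable_comp hf) ?_ ?_ ?_).symm
  · intro s _ _
    exact (T.integrable_comp integrable_condExp).integrableOn
  · intro s hs hμs
    rw [T.integral_comp_comm integrable_condExp.integrableOn,
      T.integral_comp_comm hf.integrableOn, setIntegral_condExp hm hf hs]
  · exact ((T.continuous.comp_stronglyMeasurable stronglyMeasurable_condExp)).aestronglyMeasurable

private lemma stmt11_mul_L2_integrable {Ω : Type*} {m0 : MeasurableSpace Ω} {μ : Measure Ω}
    {f g : Ω → ℝ} (hf : MemLp f 2 μ) (hg : MemLp g 2 μ) :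
    Integrable (fun ω => f ω * g ω) μ := by
  have h2 : (1 : ENNReal)/1 = 1/2 + 1/2 := by
    rw [ENNReal.div_add_div_same, one_div_one, one_add_one_eq_two]
    exact (ENNReal.div_self two_ne_zero ENNReal.ofNat_ne_top).symm
  have := hf.smul hg (p := 2) (q := 2) (r := 1)
  rw [← memLp_one_iff_integrable]
  convert this using 1
  ext ω; simp [smul_eq_mul, mul_comm]

private lemma stmt11_coord_le_norm {d : ℕ} (x : EuclideanSpace ℝ (Fin d)) (i : Fin d) :
    ‖x i‖ ≤ ‖x‖ := by
  have h1 : x i = ⟪EuclideanSpace.single i (1:ℝ), x⟫ := by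
    rw [EuclideanSpace.inner_single_left]; simp
  rw [h1, Real.norm_eq_abs]
  calc |⟪EuclideanSpace.single i (1:ℝ), x⟫| ≤ ‖EuclideanSpace.single i (1:ℝ)‖ * ‖x‖ :=
        abs_real_inner_le_norm _ _
    _ = ‖x‖ := by rw [EuclideanSpace.norm_single]; simp

end Aux

theorem stmt11 {Ω : Type*} [MeasureSpace Ω] [IsProbabilityMeasure (ℙ : Measure Ω)]
    {d : ℕ} (F : EuclideanSpace ℝ (Fin d) → ℝ)
    (F' : EuclideanSpace ℝ (Fin d) → EuclideanSpace ℝ (Fin d))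
    (μ L μh β : ℝ) (hμ : 0 < μ) (hL : 0 < L) (hμh : 0 < μh)
    (hF : ∀ x, HasGradientAt F (F' x) x)
    (hstrong : ∀ x y, ⟪F' x - F' y, x - y⟫ ≥ μ * ‖x - y‖ ^ 2)
    (hlip : ∀ x y, ‖F' x - F' y‖ ≤ L * ‖x - y‖)
    (θstar : EuclideanSpace ℝ (Fin d))
    (hgrad0 : F' θstar = 0)
    (hmin : ∀ θ, F θstar ≤ F θ)
    (θk vk : Ω → EuclideanSpace ℝ (Fin d)) (σtilde : Ω → ℝ)
    (hθmeas : Measurable θk) (hvmeas : Measurable vk)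
    (hθL2 : MemLp θk 2 (ℙ : Measure Ω)) (hvL2 : MemLp vk 2 (ℙ : Measure Ω))
    (hσ0 : ∀ ω, 0 ≤ σtilde ω)
    (hσint : Integrable σtilde (ℙ : Measure Ω))
    -- conditional mean of v_k given θ_k:
    (hcondmean : (ℙ : Measure Ω)[vk | MeasurableSpace.comap θk inferInstance]
        =ᵐ[(ℙ : Measure Ω)] fun ω => μh • F' (θk ω))
    -- conditional second moment of v_k given θ_k:
    (hcondsq : (ℙ : Measure Ω)[(fun ω => ‖vk ω‖ ^ 2) | MeasurableSpace.comap θk inferInstance]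
        =ᵐ[(ℙ : Measure Ω)] fun ω => μh ^ 2 * ‖F' (θk ω)‖ ^ 2 + σtilde ω)
    (hβ0 : 0 < β) (hβ : β ≤ 2 / (μh * (μ + L))) :
    ∫ ω, ‖(θk ω - β • vk ω) - θstar‖ ^ 2 ∂(ℙ : Measure Ω)
      ≤ (1 - 2 * β * μh * μ * L / (μ + L)) * ∫ ω, ‖θk ω - θstar‖ ^ 2 ∂(ℙ : Measure Ω)
        + β ^ 2 * ∫ ω, σtilde ω ∂(ℙ : Measure Ω) := by
  set P : Measure Ω := (ℙ : Measure Ω) with hP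
  set m : MeasurableSpace Ω := MeasurableSpace.comap θk inferInstance with hmdef
  have hm : m ≤ _ := hθmeas.comap_le
  set X : Ω → EuclideanSpace ℝ (Fin d) := fun ω => θk ω - θstar with hX
  set G : Ω → EuclideanSpace ℝ (Fin d) := fun ω => F' (θk ω) with hGdef
  -- basic positivity
  have hpL : (0:ℝ) < μ + L := by linarith
  -- measurability / L² facts
  have hXL2 : MemLp X 2 P := hθL2.sub (memLp_const θstar)
  have hXmeas : Measurable[MeasureSpace.toMeasurableSpace] X := hθmeas.sub measurable_const
  have hF'lip : LipschitzWith (Real.toNNReal L) F' := by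
    apply LipschitzWith.of_dist_le_mul
    intro a b
    rw [dist_eq_norm, dist_eq_norm, Real.coe_toNNReal L hL.le]
    exact hlip a b
  have hGmeas : Measurable[MeasureSpace.toMeasurableSpace] G := hF'lip.continuous.measurable.comp hθmeas
  have hGle : ∀ ω, ‖G ω‖ ≤ L * ‖X ω‖ := by
    intro ω
    have := hlip (θk ω) θstar
    rwa [hgrad0, sub_zero] at this
  have hGL2 : MemLp G 2 P := by
    refine MemLp.of_le_mul (c := L) hXL2 hGmeas.aestronglyMeasurable ?_
    exact Filter.Eventually.of_forall hGle
  -- integrable squares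
  have iX2 : Integrable (fun ω => ‖X ω‖ ^ 2) P :=
    (memLp_two_iff_integrable_sq_norm hXL2.1).mp hXL2
  have iv2 : Integrable (fun ω => ‖vk ω‖ ^ 2) P :=
    (memLp_two_iff_integrable_sq_norm hvL2.1).mp hvL2
  have iG2 : Integrable (fun ω => ‖G ω‖ ^ 2) P :=
    (memLp_two_iff_integrable_sq_norm hGL2.1).mp hGL2
  have ivk : Integrable vk P := hvL2.integrable one_le_two
  -- coordinates
  have hXiL2 : ∀ i, MemLp (fun ω => X ω i) 2 P := by
    intro i
    refine hXL2.of_le ?_ (Filter.Eventually.of_forall fun ω => stmt11_coord_le_norm (X ω) i)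
    exact ((EuclideanSpace.proj (𝕜 := ℝ) i).continuous.measurable.comp hXmeas).aestronglyMeasurable
  have hviL2 : ∀ i, MemLp (fun ω => vk ω i) 2 P := by
    intro i
    refine hvL2.of_le ?_ (Filter.Eventually.of_forall fun ω => stmt11_coord_le_norm (vk ω) i)
    exact ((EuclideanSpace.proj (𝕜 := ℝ) i).continuous.measurable.comp hvmeas).aestronglyMeasurable
  have hGiL2 : ∀ i, MemLp (fun ω => G ω i) 2 P := by
    intro i
    refine hGL2.of_le ?_ (Filter.Eventually.of_forall fun ω => stmt11_coord_le_norm (G ω) i)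
    exact ((EuclideanSpace.proj (𝕜 := ℝ) i).continuous.measurable.comp hGmeas).aestronglyMeasurable
  -- m-measurability of X coordinates
  have hθm : Measurable[m] θk := fun s hs => ⟨s, hs, rfl⟩
  have hXim : ∀ i, StronglyMeasurable[m] (fun ω => X ω i) := by
    intro i
    have hc : Continuous (fun z : EuclideanSpace ℝ (Fin d) => (z - θstar) i) :=
      (EuclideanSpace.proj (𝕜 := ℝ) i).continuous.comp (continuous_id.sub continuous_const)
    exact (hc.measurable.comp hθm).stronglyMeasurable
  -- coordinate conditional expectation of vk
  have hcoord : ∀ i, (P[(fun ω => vk ω i)|m]) =ᵐ[P] fun ω => μh * G ω i := by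
    intro i
    have h0 : (fun ω => vk ω i) = fun ω => (EuclideanSpace.proj (𝕜 := ℝ) i) (vk ω) := by
      funext ω; simp
    rw [h0]
    refine (stmt11_condexp_clm hm (EuclideanSpace.proj (𝕜 := ℝ) i) ivk).trans ?_
    refine hcondmean.mono fun ω hω => ?_
    show (EuclideanSpace.proj (𝕜 := ℝ) i) ((P[vk|m]) ω) = μh * G ω i
    rw [hω]
    simp [hGdef]
  -- inner products as coordinate sums
  have hinnerXv : ∀ ω, ⟪X ω, vk ω⟫ = ∑ i, X ω i * vk ω i := by
    intro ω; rw [PiLp.inner_apply]; simp [RCLike.inner_apply, mul_comm]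
  have hinnerXG : ∀ ω, ⟪X ω, G ω⟫ = ∑ i, X ω i * G ω i := by
    intro ω; rw [PiLp.inner_apply]; simp [RCLike.inner_apply, mul_comm]
  -- integrability of the products
  have iXvi : ∀ i, Integrable (fun ω => X ω i * vk ω i) P := fun i =>
    stmt11_mul_L2_integrable (hXiL2 i) (hviL2 i)
  have iXGi : ∀ i, Integrable (fun ω => X ω i * G ω i) P := fun i =>
    stmt11_mul_L2_integrable (hXiL2 i) (hGiL2 i)
  have iXv : Integrable (fun ω => ⟪X ω, vk ω⟫) P := by
    have : (fun ω => ⟪X ω, vk ω⟫) = fun ω => ∑ i, X ω i * vk ω i := funext hinnerXv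
    rw [this]
    exact integrable_finset_sum _ fun i _ => iXvi i
  have iXG : Integrable (fun ω => ⟪X ω, G ω⟫) P := by
    have : (fun ω => ⟪X ω, G ω⟫) = fun ω => ∑ i, X ω i * G ω i := funext hinnerXG
    rw [this]
    exact integrable_finset_sum _ fun i _ => iXGi i
  -- Tower property, coordinatewise
  have htower_i : ∀ i, ∫ ω, X ω i * vk ω i ∂P = μh * ∫ ω, X ω i * G ω i ∂P := by
    intro i
    have hpull := condExp_mul_of_stronglyMeasurable_left (μ := P) (hXim i)
      (iXvi i) ((hviL2 i).integrable one_le_two)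
    have e1 : ∫ ω, X ω i * vk ω i ∂P
        = ∫ ω, (P[(fun ω => X ω i) * (fun ω => vk ω i)|m]) ω ∂P := by
      rw [integral_condExp hm]
      rfl
    rw [e1, integral_congr_ae hpull]
    have e2 : (fun ω => X ω i) * (P[(fun ω => vk ω i)|m])
        =ᵐ[P] fun ω => μh * (X ω i * G ω i) := by
      refine (hcoord i).mono fun ω hω => ?_
      simp only [Pi.mul_apply]
      rw [hω]
      ring
    rw [integral_congr_ae e2, integral_const_mul]
  -- Tower over the inner products
  have htower1 : ∫ ω, ⟪X ω, vk ω⟫ ∂P = μh * ∫ ω, ⟪X ω, G ω⟫ ∂P := by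
    rw [show (fun ω => ⟪X ω, vk ω⟫) = fun ω => ∑ i, X ω i * vk ω i from funext hinnerXv,
      show (fun ω => ⟪X ω, G ω⟫) = fun ω => ∑ i, X ω i * G ω i from funext hinnerXG,
      integral_finset_sum _ fun i _ => iXvi i,
      integral_finset_sum _ fun i _ => iXGi i, Finset.mul_sum]
    exact Finset.sum_congr rfl fun i _ => htower_i i
  -- second moment tower
  have htower2 : ∫ ω, ‖vk ω‖ ^ 2 ∂P
      = μh ^ 2 * ∫ ω, ‖G ω‖ ^ 2 ∂P + ∫ ω, σtilde ω ∂P := by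
    have e1 : ∫ ω, ‖vk ω‖ ^ 2 ∂P = ∫ ω, (P[(fun ω => ‖vk ω‖ ^ 2)|m]) ω ∂P :=
      (integral_condExp hm).symm
    have iGc : Integrable (fun ω => μh ^ 2 * ‖G ω‖ ^ 2) P := iG2.const_mul _
    rw [e1, integral_congr_ae hcondsq, integral_add iGc hσint, integral_const_mul]
  -- pointwise expansion of the squared norm
  have hexp : ∀ ω, ‖(θk ω - β • vk ω) - θstar‖ ^ 2
      = ‖X ω‖ ^ 2 - 2 * β * ⟪X ω, vk ω⟫ + β ^ 2 * ‖vk ω‖ ^ 2 := by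
    intro ω
    have h0 : (θk ω - β • vk ω) - θstar = X ω - β • vk ω := by
      rw [hX]; beta_reduce; abel
    rw [h0, norm_sub_sq_real, real_inner_smul_right, norm_smul, Real.norm_eq_abs,
      mul_pow, sq_abs]
    ring
  -- integral of LHS
  have hLHS : ∫ ω, ‖(θk ω - β • vk ω) - θstar‖ ^ 2 ∂P
      = ∫ ω, ‖X ω‖ ^ 2 ∂P - 2 * β * ∫ ω, ⟪X ω, vk ω⟫ ∂P + β ^ 2 * ∫ ω, ‖vk ω‖ ^ 2 ∂P := by
    have iA : Integrable (fun ω => 2 * β * ⟪X ω, vk ω⟫) P := iXv.const_mul _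
    have iB : Integrable (fun ω => ‖X ω‖ ^ 2 - 2 * β * ⟪X ω, vk ω⟫) P := iX2.sub iA
    have iC : Integrable (fun ω => β ^ 2 * ‖vk ω‖ ^ 2) P := iv2.const_mul _
    rw [show (fun ω => ‖(θk ω - β • vk ω) - θstar‖ ^ 2)
        = fun ω => ‖X ω‖ ^ 2 - 2 * β * ⟪X ω, vk ω⟫ + β ^ 2 * ‖vk ω‖ ^ 2 from funext hexp,
      integral_add iB iC, integral_sub iX2 iA, integral_const_mul, integral_const_mul]
  -- pointwise key inequality
  have hkey : ∀ ω, (μ + L) * ⟪X ω, G ω⟫ ≥ μ * L * ‖X ω‖ ^ 2 + ‖G ω‖ ^ 2 := by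
    intro ω
    have := stmt11_key hμ hL hF hstrong hlip (θk ω) θstar
    rw [hgrad0, sub_zero] at this
    rwa [real_inner_comm]
  have hβ2 : β * μh * (μ + L) ≤ 2 := by
    have hpos : (0:ℝ) < μh * (μ + L) := by positivity
    have := (le_div_iff₀ hpos).mp hβ
    nlinarith [this]
  -- pointwise negativity
  have hptneg : ∀ ω, 2 * β * μh * μ * L / (μ + L) * ‖X ω‖ ^ 2
      - 2 * β * μh * ⟪X ω, G ω⟫ + β ^ 2 * μh ^ 2 * ‖G ω‖ ^ 2 ≤ 0 := by
    intro ω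
    have hk := hkey ω
    have hD : 2 * β * μh * μ * L / (μ + L) * (μ + L) = 2 * β * μh * μ * L := by
      field_simp
    have hbmn : 0 ≤ β * μh := by positivity
    have hg2 : 0 ≤ ‖G ω‖ ^ 2 := sq_nonneg _
    have hn2 : 0 ≤ ‖X ω‖ ^ 2 := sq_nonneg _
    -- multiply goal by (μ + L) > 0
    rw [← mul_le_mul_iff_left₀ hpL, zero_mul]
    calc (2 * β * μh * μ * L / (μ + L) * ‖X ω‖ ^ 2
          - 2 * β * μh * ⟪X ω, G ω⟫ + β ^ 2 * μh ^ 2 * ‖G ω‖ ^ 2) * (μ + L)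
        = 2 * β * μh * μ * L / (μ + L) * (μ + L) * ‖X ω‖ ^ 2
          - 2 * β * μh * ((μ + L) * ⟪X ω, G ω⟫) + β ^ 2 * μh ^ 2 * (μ + L) * ‖G ω‖ ^ 2 := by
          ring
      _ ≤ 2 * β * μh * μ * L * ‖X ω‖ ^ 2
          - 2 * β * μh * (μ * L * ‖X ω‖ ^ 2 + ‖G ω‖ ^ 2)
          + β ^ 2 * μh ^ 2 * (μ + L) * ‖G ω‖ ^ 2 := by
          rw [hD]
          have := mul_le_mul_of_nonneg_left hk (by positivity : (0:ℝ) ≤ 2 * β * μh)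
          linarith [this]
      _ = ‖G ω‖ ^ 2 * (β * μh) * (β * μh * (μ + L) - 2) := by ring
      _ ≤ 0 := by
          apply mul_nonpos_of_nonneg_of_nonpos
          · positivity
          · linarith
  -- integrate the pointwise inequality
  have hneg : ∫ ω, (2 * β * μh * μ * L / (μ + L) * ‖X ω‖ ^ 2
      - 2 * β * μh * ⟪X ω, G ω⟫ + β ^ 2 * μh ^ 2 * ‖G ω‖ ^ 2) ∂P ≤ 0 :=
    integral_nonpos fun ω => hptneg ω
  have hsplit : ∫ ω, (2 * β * μh * μ * L / (μ + L) * ‖X ω‖ ^ 2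
      - 2 * β * μh * ⟪X ω, G ω⟫ + β ^ 2 * μh ^ 2 * ‖G ω‖ ^ 2) ∂P
      = 2 * β * μh * μ * L / (μ + L) * ∫ ω, ‖X ω‖ ^ 2 ∂P
        - 2 * β * μh * ∫ ω, ⟪X ω, G ω⟫ ∂P
        + β ^ 2 * μh ^ 2 * ∫ ω, ‖G ω‖ ^ 2 ∂P := by
    have iA : Integrable (fun ω => 2 * β * μh * μ * L / (μ + L) * ‖X ω‖ ^ 2) P :=
      iX2.const_mul _
    have iB : Integrable (fun ω => 2 * β * μh * ⟪X ω, G ω⟫) P := iXG.const_mul _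
    have iAB : Integrable
        (fun ω => 2 * β * μh * μ * L / (μ + L) * ‖X ω‖ ^ 2 - 2 * β * μh * ⟪X ω, G ω⟫) P :=
      iA.sub iB
    have iC : Integrable (fun ω => β ^ 2 * μh ^ 2 * ‖G ω‖ ^ 2) P := iG2.const_mul _
    rw [integral_add iAB iC, integral_sub iA iB, integral_const_mul, integral_const_mul,
      integral_const_mul]
  rw [hsplit] at hneg
  -- bridge the goal to the X notation
  have hbr1 : ∫ ω, ‖θk ω - θstar‖ ^ 2 ∂P = ∫ ω, ‖X ω‖ ^ 2 ∂P := rfl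
  rw [hbr1, hLHS, htower1, htower2]
  linarith [hneg]
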